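/- arXiv:2407.12403 — 2 statements merged into one kernel-verified Lean document; each statement's English description precedes it below -/
import Mathlib

section
/- For every d ≥ 1 and every n ≥ 1, there exists a symmetric density matrix σ^u on (ℂ^d)^{⊗n} such that every symmetric density matrix σ on (ℂ^d)^{⊗n} satisfies σ ≤ (n+1)^{d²−1}·σ^u. -/
open scoped Kronecker ComplexOrder
open Matrix Filter

noncomputable section

/-- Real power of a Hermitian matrix via functional calculus (spectral powers,
with the convention `0 ^ t = 0`); junk value `0` on non-Hermitian matrices. -/
noncomputable def Matrix.herPow {n : Type*} [Fintype n] [DecidableEq n]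
    (A : Matrix n n ℂ) (t : ℝ) : Matrix n n ℂ :=
  if hA : A.IsHermitian then
    (hA.eigenvectorUnitary : Matrix n n ℂ) *
      Matrix.diagonal (fun i =>
        Complex.ofReal (if hA.eigenvalues i = 0 then (0 : ℝ) else hA.eigenvalues i ^ t)) *
      star (hA.eigenvectorUnitary : Matrix n n ℂ)
  else 0

/-- The Petz Rényi divergence `D_α(ρ‖σ) = (1/(α−1))·log₂ tr(ρ^α σ^{1−α})`. -/
noncomputable def petzD {n : Type*} [Fintype n] [DecidableEq n]
    (α : ℝ) (ρ σ : Matrix n n ℂ) : ℝ :=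
  (α - 1)⁻¹ * Real.logb 2 ((ρ.herPow α * σ.herPow (1 - α)).trace.re)

/-- A density matrix: positive semidefinite with trace one. -/
def IsDensityMatrix {n : Type*} [Fintype n] (A : Matrix n n ℂ) : Prop :=
  A.PosSemidef ∧ A.trace = 1

/-- A probability distribution on a finite set. -/
def IsProbDist {X : Type*} [Fintype X] (p : X → ℝ) : Prop :=
  (∀ x, 0 ≤ p x) ∧ ∑ x, p x = 1

/-- The cq state `ρ_XB = Σ_x p_x |x⟩⟨x| ⊗ ρ_x`. -/
noncomputable def cqState {X B : Type*} [Fintype X] [DecidableEq X] [Fintype B] [DecidableEq B]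
    (p : X → ℝ) (ρ : X → Matrix B B ℂ) : Matrix (X × B) (X × B) ℂ :=
  ∑ x, (p x : ℂ) • (Matrix.single x x 1 ⊗ₖ ρ x)

/-- The Rényi mutual information `I_α(N,p) = inf_{σ_B} D_α(ρ_XB ‖ ρ_X ⊗ σ_B)`. -/
noncomputable def Ialpha {X B : Type*} [Fintype X] [DecidableEq X] [Fintype B] [DecidableEq B]
    (α : ℝ) (ρ : X → Matrix B B ℂ) (p : X → ℝ) : ℝ :=
  ⨅ σ : {σ : Matrix B B ℂ // IsDensityMatrix σ},
    petzD α (cqState p ρ) ((Matrix.diagonal fun x => (p x : ℂ)) ⊗ₖ (σ : Matrix B B ℂ))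

/-- The channel Rényi mutual information `I_α(N) = max_p I_α(N,p)`. -/
noncomputable def IalphaChan {X B : Type*} [Fintype X] [DecidableEq X] [Fintype B] [DecidableEq B]
    (α : ℝ) (ρ : X → Matrix B B ℂ) : ℝ :=
  ⨆ p : {p : X → ℝ // IsProbDist p}, Ialpha α ρ (p : X → ℝ)

/-- The tensor product state `ρ_{x^n} = ρ_{x_1} ⊗ ⋯ ⊗ ρ_{x_n}` (also serves as the
channel `N^{⊗n}`). -/
noncomputable def prodState {X B : Type*} {n : ℕ} (ρ : X → Matrix B B ℂ)
    (xs : Fin n → X) : Matrix (Fin n → B) (Fin n → B) ℂ :=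
  fun v w => ∏ i, ρ (xs i) (v i) (w i)

/-- `Pe ρ n M`: the infimum of the average error probability over all `(n, M)` codes
for the cq channel `x ↦ ρ x`. -/
noncomputable def Pe {X B : Type*} [Fintype X] [Fintype B] [DecidableEq B]
    (ρ : X → Matrix B B ℂ) (n M : ℕ) : ℝ :=
  sInf {e | ∃ (c : Fin M → (Fin n → X)) (Λ : Fin M → Matrix (Fin n → B) (Fin n → B) ℂ),
    (∀ m, (Λ m).PosSemidef) ∧ (∑ m, Λ m = 1) ∧
    e = 1 - (M : ℝ)⁻¹ * ∑ m, ((Λ m * prodState ρ (c m)).trace).re}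

/-- The reliability function `E(N,r) = limsup_n −(1/n)·log₂ P_e^{(n)}(N,r)`,
where the number of messages is `⌈2^{nr}⌉`. -/
noncomputable def relFn {X B : Type*} [Fintype X] [Fintype B] [DecidableEq B]
    (ρ : X → Matrix B B ℂ) (r : ℝ) : ℝ :=
  Filter.limsup (fun n : ℕ =>
    -(1 / (n : ℝ)) * Real.logb 2 (Pe ρ n ⌈(2 : ℝ) ^ ((n : ℝ) * r)⌉₊)) Filter.atTop

/-- Von Neumann entropy `S(ρ) = −tr(ρ log₂ ρ)` computed via eigenvalues. -/
noncomputable def vNEntropy {n : Type*} [Fintype n] [DecidableEq n] (A : Matrix n n ℂ) : ℝ :=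
  if hA : A.IsHermitian then -∑ i, hA.eigenvalues i * Real.logb 2 (hA.eigenvalues i) else 0

/-- The Rényi conditional entropy `H_α^↑(X|B)_ρ = sup_{σ_B} (−D_α(ρ_XB ‖ 1_X ⊗ σ_B))`. -/
noncomputable def condRenyiH {X B : Type*} [Fintype X] [DecidableEq X] [Fintype B] [DecidableEq B]
    (α : ℝ) (ρXB : Matrix (X × B) (X × B) ℂ) : ℝ :=
  ⨆ σ : {σ : Matrix B B ℂ // IsDensityMatrix σ},
    -petzD α ρXB ((1 : Matrix X X ℂ) ⊗ₖ (σ : Matrix B B ℂ))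

/-- The permutation unitary `V_π` on the `n`-fold tensor power, as a matrix on the
index set `Fin n → A` (`V_π e_v = e_{v ∘ π⁻¹}`). -/
def permMatrixOn (A : Type*) [DecidableEq A] {n : ℕ} (π : Equiv.Perm (Fin n)) :
    Matrix (Fin n → A) (Fin n → A) ℂ :=
  fun v w => if w = v ∘ π then 1 else 0

/-- A symmetric (permutation-invariant) matrix on the `n`-fold tensor power. -/
def IsSymmetricState {d n : ℕ} (σ : Matrix (Fin n → Fin d) (Fin n → Fin d) ℂ) : Prop :=
  ∀ π : Equiv.Perm (Fin n),
    permMatrixOn (Fin d) π * σ * (permMatrixOn (Fin d) π)ᴴ = σ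

/-- Partial trace over the second tensor factor. -/
noncomputable def ptraceB {A B : Type*} [Fintype B] (M : Matrix (A × B) (A × B) ℂ) :
    Matrix A A ℂ :=
  fun a a' => ∑ b, M (a, b) (a', b)

/-- Partial trace over the first tensor factor. -/
noncomputable def ptraceA {A B : Type*} [Fintype A] (M : Matrix (A × B) (A × B) ℂ) :
    Matrix B B ℂ :=
  fun b b' => ∑ a, M (a, b) (a, b')

/-- The empirical distribution (type) of a sequence. -/
noncomputable def empDist {X : Type*} [Fintype X] [DecidableEq X] {n : ℕ}
    (xs : Fin n → X) : X → ℝ :=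
  fun x => (Finset.univ.filter fun i => xs i = x).card / (n : ℝ)

/-- A type for sequences of length `n`: a probability distribution whose entries are
integer multiples of `1/n`. -/
def IsType {X : Type*} [Fintype X] (n : ℕ) (t : X → ℝ) : Prop :=
  IsProbDist t ∧ ∀ x, ∃ k : ℕ, t x = (k : ℝ) / (n : ℝ)

/-- The uniform distribution on the type class `T_n^t`, extended by zero. -/
noncomputable def unifTypeClass {X : Type*} [Fintype X] [DecidableEq X] {n : ℕ}
    (t : X → ℝ) : (Fin n → X) → ℝ :=
  fun xs => if empDist xs = t then
    ((Finset.univ.filter fun ys : Fin n → X => empDist ys = t).card : ℝ)⁻¹ else 0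

/-- The error probability of a data-compression-with-side-information scheme. -/
noncomputable def dcErr {X : Type*} [Fintype X] {d : ℕ} (p : X → ℝ)
    (ρ : X → Matrix (Fin d) (Fin d) ℂ) (n : ℕ) {Chat Ctil : Type*} [Fintype Chat] [Fintype Ctil]
    (f : (Fin n → X) ≃ Chat × Ctil)
    (Λ : Ctil → Chat → Matrix (Fin n → Fin d) (Fin n → Fin d) ℂ) : ℝ :=
  ∑ xs : Fin n → X, (∏ i, p (xs i)) *
    (1 - ((Λ (f xs).2 (f xs).1 * prodState ρ xs).trace).re)




namespace UnivSym

open Finset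

variable {n : ℕ} {A : Type*} [Fintype A] [DecidableEq A]

/-- Equivalence: two tuples are related iff they differ by a permutation of indices. -/
def permRel (n : ℕ) (A : Type*) : Setoid (Fin n → A) where
  r f g := ∃ π : Equiv.Perm (Fin n), f = g ∘ π
  iseqv := by
    refine ⟨fun f => ⟨1, rfl⟩, ?_, ?_⟩
    · rintro f g ⟨π, rfl⟩
      exact ⟨π⁻¹, by ext i; simp⟩
    · rintro f g h ⟨π, rfl⟩ ⟨τ, rfl⟩
      exact ⟨τ * π, by ext i; simp⟩

def cnt (f : Fin n → A) (a : A) : ℕ := (Finset.univ.filter fun i => f i = a).card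

lemma cnt_sum (f : Fin n → A) : ∑ a, cnt f a = n := by
  unfold cnt
  rw [← Finset.card_eq_sum_card_fiberwise (fun x (_ : x ∈ Finset.univ) => Finset.mem_univ (f x))]
  simp

lemma cnt_le (f : Fin n → A) (a : A) : cnt f a ≤ n := by
  simpa [cnt] using Finset.card_filter_le Finset.univ (fun i => f i = a)

lemma cnt_comp (g : Fin n → A) (π : Equiv.Perm (Fin n)) (a : A) :
    cnt (g ∘ π) a = cnt g a := by
  unfold cnt
  apply Finset.card_bij (fun i _ => π i)
  · intro i hi; simp_all
  · intro i _ j _ hij; exact π.injective hij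
  · intro j hj
    exact ⟨π⁻¹ j, by simp_all, by simp⟩

lemma exists_perm_of_cnt_eq {f g : Fin n → A} (h : ∀ a, cnt f a = cnt g a) :
    ∃ π : Equiv.Perm (Fin n), f = g ∘ π := by
  have hcard : ∀ a : A, Fintype.card {i // f i = a} = Fintype.card {i // g i = a} := by
    intro a
    rw [Fintype.card_subtype, Fintype.card_subtype]
    exact h a
  have e : ∀ a : A, {i // f i = a} ≃ {i // g i = a} := fun a =>
    Fintype.equivOfCardEq (hcard a)
  refine ⟨(Equiv.sigmaFiberEquiv f).symm.trans
    ((Equiv.sigmaCongrRight e).trans (Equiv.sigmaFiberEquiv g)), ?_⟩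
  funext i
  have h1 : (Equiv.sigmaFiberEquiv f).symm i = ⟨f i, i, rfl⟩ := rfl
  simp only [Function.comp_apply, Equiv.trans_apply, h1, Equiv.sigmaCongrRight_apply]
  exact ((e (f i)) ⟨i, rfl⟩).2.symm


section Orbits

variable (n A)

/-- The orbit space of tuples up to permutation. -/
def Orb := Quotient (permRel n A)

noncomputable instance : Fintype (Orb n A) :=
  @Quotient.fintype _ _ (permRel n A) (fun _ _ => Classical.dec _)

variable {n A}

lemma cnt_eq_of_rel {f g : Fin n → A} (h : (permRel n A).r f g) (a : A) :
    cnt f a = cnt g a := by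
  obtain ⟨π, rfl⟩ := h
  exact cnt_comp g π a

/-- The count function descends to orbits, dropping one coordinate. -/
noncomputable def orbCnt (a₀ : A) : Orb n A → ({a : A // a ≠ a₀} → Fin (n + 1)) :=
  Quotient.lift (fun f => fun a => (⟨cnt f a.val, Nat.lt_succ_of_le (cnt_le f a.val)⟩ : Fin (n+1)))
    (by
      intro f g h
      funext a
      exact Fin.ext (cnt_eq_of_rel h a.val))

lemma orbCnt_injective (a₀ : A) : Function.Injective (orbCnt (n := n) a₀) := by
  intro q₁ q₂ h
  induction q₁ using Quotient.ind
  induction q₂ using Quotient.ind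
  rename_i f g
  have hcnt : ∀ a : A, a ≠ a₀ → cnt f a = cnt g a := by
    intro a ha
    have := congrFun h ⟨a, ha⟩
    simpa [orbCnt] using congrArg Fin.val this
  have hall : ∀ a : A, cnt f a = cnt g a := by
    have hsum : cnt f a₀ + ∑ a ∈ Finset.univ.erase a₀, cnt f a
        = cnt g a₀ + ∑ a ∈ Finset.univ.erase a₀, cnt g a := by
      rw [Finset.add_sum_erase _ _ (Finset.mem_univ a₀),
        Finset.add_sum_erase _ _ (Finset.mem_univ a₀), cnt_sum, cnt_sum]
    have hrest : ∑ a ∈ Finset.univ.erase a₀, cnt f a = ∑ a ∈ Finset.univ.erase a₀, cnt g a :=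
      Finset.sum_congr rfl (fun a ha => hcnt a (Finset.ne_of_mem_erase ha))
    intro a
    rcases eq_or_ne a a₀ with rfl | ha
    · omega
    · exact hcnt a ha
  obtain ⟨π, hπ⟩ := exists_perm_of_cnt_eq hall
  exact Quotient.sound ⟨π, hπ⟩

lemma card_ne (a₀ : A) : Fintype.card {a : A // a ≠ a₀} = Fintype.card A - 1 := by
  simp only [ne_eq]
  rw [Fintype.card_subtype_compl, Fintype.card_subtype_eq]

lemma orbCnt_not_surj (a₀ : A) (hn : 1 ≤ n) (hA : 3 ≤ Fintype.card A) :
    (fun _ => (⟨n, Nat.lt_succ_self n⟩ : Fin (n+1))) ∉ Set.range (orbCnt (n := n) (A := A) a₀) := by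
  rintro ⟨q, hq⟩
  induction q using Quotient.ind
  rename_i f
  -- there are two distinct elements ≠ a₀
  have h2 : 2 ≤ Fintype.card {a : A // a ≠ a₀} := by
    rw [card_ne]; omega
  obtain ⟨a₁, a₂, h12⟩ := Fintype.exists_pair_of_one_lt_card (α := {a : A // a ≠ a₀}) (by omega)
  have hval : ∀ a : {a : A // a ≠ a₀}, cnt f a.val = n := by
    intro a
    have := congrFun hq a
    simpa [orbCnt] using congrArg Fin.val this
  have hle : cnt f a₁.val + cnt f a₂.val ≤ ∑ a, cnt f a := by
    rw [show (∑ a, cnt f a) = ∑ a ∈ Finset.univ, cnt f a from rfl]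
    have : ({a₁.val, a₂.val} : Finset A) ⊆ Finset.univ := Finset.subset_univ _
    calc cnt f a₁.val + cnt f a₂.val = ∑ a ∈ ({a₁.val, a₂.val} : Finset A), cnt f a := by
          rw [Finset.sum_pair (by exact fun h => h12 (Subtype.ext h))]
      _ ≤ _ := Finset.sum_le_sum_of_subset this
  rw [hval a₁, hval a₂, cnt_sum] at hle
  omega

lemma card_orb_lt (hn : 1 ≤ n) (hA : 3 ≤ Fintype.card A) :
    Fintype.card (Orb n A) < (n + 1) ^ (Fintype.card A - 1) := by
  have hA0 : Nonempty A := Fintype.card_pos_iff.mp (by omega)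
  obtain ⟨a₀⟩ := hA0
  have h1 : Fintype.card (Orb n A) < Fintype.card ({a : A // a ≠ a₀} → Fin (n + 1)) :=
    Fintype.card_lt_of_injective_of_notMem _ (orbCnt_injective a₀) (orbCnt_not_surj a₀ hn hA)
  have h2 : Fintype.card ({a : A // a ≠ a₀} → Fin (n + 1)) = (n + 1) ^ (Fintype.card A - 1) := by
    rw [Fintype.card_fun, Fintype.card_fin, card_ne]
  omega

end Orbits


section MatrixPart

open Matrix
open scoped ComplexOrder

variable {n d : ℕ}

/-- Invariance of a matrix under simultaneous permutation of tensor factors. -/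
def Inv (M : Matrix (Fin n → Fin d) (Fin n → Fin d) ℂ) : Prop :=
  ∀ (π : Equiv.Perm (Fin n)) (v w : Fin n → Fin d), M (v ∘ π) (w ∘ π) = M v w

/-- The real subspace of invariant Hermitian matrices. -/
noncomputable def WH (n d : ℕ) : Submodule ℝ (Matrix (Fin n → Fin d) (Fin n → Fin d) ℂ) where
  carrier := {M | M.IsHermitian ∧ Inv M}
  add_mem' := by
    rintro M N ⟨hM1, hM2⟩ ⟨hN1, hN2⟩
    exact ⟨hM1.add hN1, fun π v w => by
      simp only [Matrix.add_apply, hM2 π v w, hN2 π v w]⟩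
  zero_mem' := ⟨Matrix.isHermitian_zero, fun π v w => rfl⟩
  smul_mem' := by
    rintro r M ⟨hM1, hM2⟩
    constructor
    · show ((r • M)ᴴ = r • M)
      ext i j
      simp only [Matrix.conjTranspose_apply, Matrix.smul_apply, Complex.real_smul, star_mul',
        Complex.star_def, Complex.conj_ofReal, Matrix.IsHermitian.apply hM1 i j]
    · intro π v w
      simp only [Matrix.smul_apply, hM2 π v w]

/-- A tuple of index pairs. -/
def pairF (v w : Fin n → Fin d) : Fin n → (Fin d × Fin d) := fun i => (v i, w i)

lemma inv_eq_out {M : Matrix (Fin n → Fin d) (Fin n → Fin d) ℂ} (hM : Inv M)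
    (v w : Fin n → Fin d) :
    M (fun i => ((Quotient.out (s := permRel n (Fin d × Fin d)) ⟦pairF v w⟧) i).1)
      (fun i => ((Quotient.out (s := permRel n (Fin d × Fin d)) ⟦pairF v w⟧) i).2) = M v w := by
  obtain ⟨π, hπ⟩ : ∃ π : Equiv.Perm (Fin n),
      (Quotient.out (s := permRel n (Fin d × Fin d)) ⟦pairF v w⟧) = pairF v w ∘ π :=
    Quotient.mk_out (s := permRel n (Fin d × Fin d)) (pairF v w)
  rw [hπ]
  have h1 : (fun i => ((pairF v w ∘ π) i).1) = v ∘ π := rfl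
  have h2 : (fun i => ((pairF v w ∘ π) i).2) = w ∘ π := rfl
  rw [h1, h2, hM π v w]

/-- The coordinates map on invariant Hermitian matrices. -/
noncomputable def Phi (n d : ℕ) : WH n d →ₗ[ℝ] (Orb n (Fin d × Fin d) → ℝ) where
  toFun M := fun q =>
    (M.val (fun i => (q.out i).1) (fun i => (q.out i).2)).re +
      (M.val (fun i => (q.out i).1) (fun i => (q.out i).2)).im
  map_add' M N := by
    funext q
    simp only [Submodule.coe_add, Matrix.add_apply, Complex.add_re, Complex.add_im,
      Pi.add_apply]
    ring
  map_smul' r M := by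
    funext q
    simp only [SetLike.val_smul, Matrix.smul_apply, Complex.smul_re, Complex.smul_im,
      RingHom.id_apply, Pi.smul_apply, smul_eq_mul]
    ring

lemma Phi_injective (n d : ℕ) : Function.Injective (Phi n d) := by
  rw [injective_iff_map_eq_zero]
  intro M hM
  have key : ∀ v w : Fin n → Fin d, (M.val v w).re + (M.val v w).im = 0 := by
    intro v w
    have := congrFun hM (⟦pairF v w⟧ : Orb n (Fin d × Fin d))
    simp only [Phi, LinearMap.coe_mk, AddHom.coe_mk, Pi.zero_apply] at this
    rwa [inv_eq_out M.2.2 v w] at this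
  have herm : ∀ v w : Fin n → Fin d, M.val w v = star (M.val v w) := by
    intro v w
    exact (Matrix.IsHermitian.apply M.2.1 w v).symm ▸ rfl
  apply Subtype.ext
  ext v w
  have h1 := key v w
  have h2 := key w v
  rw [herm v w] at h2
  simp only [Complex.star_def, Complex.conj_re, Complex.conj_im] at h2
  have hz : M.val v w = 0 := by
    apply Complex.ext <;> simp <;> linarith
  simp only [ZeroMemClass.coe_zero, Matrix.zero_apply]
  exact hz

lemma finrank_WH_le (n d : ℕ) :
    Module.finrank ℝ (WH n d) ≤ Fintype.card (Orb n (Fin d × Fin d)) := by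
  have := LinearMap.finrank_le_finrank_of_injective (Phi_injective n d)
  rwa [Module.finrank_pi] at this


/-- The set of invariant (symmetric) density matrices. -/
def DenSet (n d : ℕ) : Set (Matrix (Fin n → Fin d) (Fin n → Fin d) ℂ) :=
  {M | M.PosSemidef ∧ M.trace = 1 ∧ Inv M}

lemma hermitian_real_smul {M : Matrix (Fin n → Fin d) (Fin n → Fin d) ℂ}
    (hM : M.IsHermitian) (r : ℝ) : (r • M).IsHermitian := by
  show ((r • M)ᴴ = r • M)
  ext i j
  simp only [Matrix.conjTranspose_apply, Matrix.smul_apply, Complex.real_smul, star_mul',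
    Complex.star_def, Complex.conj_ofReal, Matrix.IsHermitian.apply hM i j]

lemma psd_real_smul {M : Matrix (Fin n → Fin d) (Fin n → Fin d) ℂ}
    (hM : M.PosSemidef) {r : ℝ} (hr : 0 ≤ r) : (r • M).PosSemidef := by
  refine Matrix.PosSemidef.of_dotProduct_mulVec_nonneg (hermitian_real_smul hM.1 r) fun x => ?_
  have hqf : star x ⬝ᵥ (r • M).mulVec x = (r : ℂ) * (star x ⬝ᵥ M.mulVec x) := by
    simp only [dotProduct, Matrix.mulVec, Matrix.smul_apply, Complex.real_smul,
      Finset.mul_sum]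
    exact Finset.sum_congr rfl fun w _ => Finset.sum_congr rfl fun u _ => by ring
  rw [hqf]
  exact mul_nonneg (by exact_mod_cast Complex.zero_le_real.mpr hr) (hM.dotProduct_mulVec_nonneg x)

lemma denset_convex (n d : ℕ) : Convex ℝ (DenSet n d) := by
  rintro x ⟨hx1, hx2, hx3⟩ y ⟨hy1, hy2, hy3⟩ a b ha hb hab
  refine ⟨(psd_real_smul hx1 ha).add (psd_real_smul hy1 hb), ?_, ?_⟩
  · rw [Matrix.trace_add, Matrix.trace_smul, Matrix.trace_smul, hx2, hy2]
    simp only [smul_eq_mul, mul_one, Complex.real_smul]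
    exact_mod_cast congrArg (fun t : ℝ => (t : ℂ)) hab
  · intro π v w
    simp only [Matrix.add_apply, Matrix.smul_apply, hx3 π v w, hy3 π v w]

lemma denset_subset_WH (n d : ℕ) : DenSet n d ⊆ (WH n d : Set _) := by
  rintro M ⟨h1, h2, h3⟩
  exact ⟨h1.1, h3⟩

lemma denset_nonempty (n d : ℕ) (hd : 1 ≤ d) :
    (((Fintype.card (Fin n → Fin d) : ℝ)⁻¹) • (1 : Matrix (Fin n → Fin d) (Fin n → Fin d) ℂ))
      ∈ DenSet n d := by
  have hcard : (0:ℝ) < Fintype.card (Fin n → Fin d) := by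
    have : Nonempty (Fin n → Fin d) := ⟨fun _ => ⟨0, hd⟩⟩
    exact_mod_cast Fintype.card_pos
  refine ⟨psd_real_smul Matrix.PosSemidef.one (by positivity), ?_, ?_⟩
  · rw [Matrix.trace_smul, Matrix.trace_one]
    simp only [smul_eq_mul, Complex.real_smul]
    rw [← Complex.ofReal_natCast, ← Complex.ofReal_mul]
    rw [inv_mul_cancel₀ (ne_of_gt hcard)]
    simp
  · intro π v w
    simp only [Matrix.smul_apply, Matrix.one_apply]
    have : (v ∘ π = w ∘ π) ↔ (v = w) := by
      constructor
      · intro h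
        funext i
        have := congrFun h (π.symm i)
        simpa using this
      · rintro rfl; rfl
    by_cases h : v = w
    · simp [h]
    · rw [if_neg h, if_neg (fun hc => h (this.mp hc))]


section EntryBound

variable {M : Matrix (Fin n → Fin d) (Fin n → Fin d) ℂ}

lemma psd_diag_nonneg (hM : M.PosSemidef) (v : Fin n → Fin d) : 0 ≤ M v v := by
  have h := hM.dotProduct_mulVec_nonneg (Pi.single v 1)
  have h1 : star (Pi.single v (1:ℂ) : (Fin n → Fin d) → ℂ) = Pi.single v 1 := by
    funext j
    simp only [Pi.star_apply, Pi.single_apply]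
    split <;> simp
  rw [h1, single_dotProduct, Matrix.mulVec_single] at h
  simpa using h

lemma diag_re_le_one (hM : M.PosSemidef) (htr : M.trace = 1) (v : Fin n → Fin d) :
    (M v v).re ≤ 1 := by
  have h0 : ∀ w, 0 ≤ (M w w).re := by
    intro w
    have := (Complex.le_def.mp (psd_diag_nonneg hM w)).1
    simpa using this
  have hsum : ∑ w, (M w w).re = 1 := by
    have h := congrArg Complex.re htr
    rw [Matrix.trace, Complex.re_sum] at h
    simpa [Matrix.diag] using h
  calc (M v v).re ≤ ∑ w, (M w w).re :=
        Finset.single_le_sum (fun w _ => h0 w) (Finset.mem_univ v)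
    _ = 1 := hsum

lemma qf_pair (hM : M.PosSemidef) (v w : Fin n → Fin d) (a b : ℂ) :
    0 ≤ star a * a * M v v + star a * b * M v w + star b * a * M w v + star b * b * M w w := by
  have h := hM.dotProduct_mulVec_nonneg (Pi.single v a + Pi.single w b)
  have hs : star ((Pi.single v a + Pi.single w b : (Fin n → Fin d) → ℂ)) =
      Pi.single v (star a) + Pi.single w (star b) := by
    funext j
    simp only [Pi.star_apply, Pi.add_apply, Pi.single_apply, star_add,
      apply_ite (star : ℂ → ℂ), star_zero]
  rw [hs, Matrix.mulVec_add, Matrix.mulVec_single, Matrix.mulVec_single,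
    add_dotProduct, dotProduct_add, dotProduct_add,
    single_dotProduct, single_dotProduct, single_dotProduct,
    single_dotProduct] at h
  try simp only [Pi.add_apply, Pi.smul_apply, Matrix.col_apply, op_smul_eq_mul] at h
  convert h using 1
  ring

lemma entry_abs_le_one (hM : M.PosSemidef) (htr : M.trace = 1) (v w : Fin n → Fin d) :
    ‖M v w‖ ≤ 1 := by
  rcases eq_or_ne (M v w) 0 with h0 | h0
  · simp [h0]
  have hwv : M w v = star (M v w) := (Matrix.IsHermitian.apply hM.1 w v).symm
  have h := qf_pair hM v w 1 (-(star (M v w)) * ((‖M v w‖ : ℝ) : ℂ)⁻¹)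
  rw [hwv] at h
  set z := M v w with hz
  set t : ℝ := ‖z‖ with ht
  have ht0 : 0 < t := norm_pos_iff.mpr h0
  have hts : ((t:ℂ)) ≠ 0 := by exact_mod_cast ne_of_gt ht0
  have hzz : z * star z = (t:ℂ) * (t:ℂ) := by
    rw [Complex.star_def, Complex.mul_conj, Complex.normSq_eq_norm_sq, ← ht]
    push_cast
    ring
  have hstz : star z = (t:ℂ) * (t:ℂ) * z⁻¹ := by
    field_simp
    rw [sq, ← hzz, Complex.star_def]
    ring
  have hstar : star (-(star z) * (t:ℂ)⁻¹) = -z * (t:ℂ)⁻¹ := by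
    simp [star_mul', Complex.star_def, Complex.conj_ofReal, map_inv₀]
  have hsimp : star (1:ℂ) * 1 * M v v + star (1:ℂ) * (-(star z) * (t:ℂ)⁻¹) * z +
      star (-(star z) * (t:ℂ)⁻¹) * 1 * star z +
      star (-(star z) * (t:ℂ)⁻¹) * (-(star z) * (t:ℂ)⁻¹) * M w w
      = M v v + M w w - 2 * (t:ℂ) := by
    rw [star_one, hstar, hstz]
    field_simp
    ring
  rw [hsimp] at h
  have hre := (Complex.le_def.mp h).1
  simp only [Complex.zero_re, Complex.sub_re, Complex.add_re, Complex.mul_re,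
    Complex.ofReal_re, Complex.ofReal_im, Complex.re_ofNat, Complex.im_ofNat] at hre
  have h1 := diag_re_le_one hM htr v
  have h2 := diag_re_le_one hM htr w
  show t ≤ 1
  nlinarith [hre, h1, h2]

end EntryBound


section Compactness

lemma isClosed_nonnegC : IsClosed {z : ℂ | 0 ≤ z} := by
  have h : {z : ℂ | 0 ≤ z} = Complex.re ⁻¹' (Set.Ici 0) ∩ Complex.im ⁻¹' {0} := by
    ext z
    simp [Complex.le_def, eq_comm]
  rw [h]
  exact (isClosed_Ici.preimage Complex.continuous_re).inter
    (isClosed_singleton.preimage Complex.continuous_im)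

lemma continuous_entry (v w : Fin n → Fin d) :
    Continuous (fun M : Matrix (Fin n → Fin d) (Fin n → Fin d) ℂ => M v w) :=
  continuous_id.matrix_elem v w

lemma denset_closed (n d : ℕ) : IsClosed (DenSet n d) := by
  have h1 : IsClosed {M : Matrix (Fin n → Fin d) (Fin n → Fin d) ℂ | M.IsHermitian} := by
    have e : {M : Matrix (Fin n → Fin d) (Fin n → Fin d) ℂ | M.IsHermitian}
        = ⋂ v, ⋂ w, {M : Matrix (Fin n → Fin d) (Fin n → Fin d) ℂ | star (M w v) = M v w} := by
      ext M
      simp [Set.mem_iInter, Matrix.IsHermitian.ext_iff]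
    rw [e]
    exact isClosed_iInter fun v => isClosed_iInter fun w =>
      isClosed_eq (continuous_star.comp (continuous_entry w v)) (continuous_entry v w)
  have h2 : IsClosed {M : Matrix (Fin n → Fin d) (Fin n → Fin d) ℂ |
      ∀ x, 0 ≤ star x ⬝ᵥ M.mulVec x} := by
    have e : {M : Matrix (Fin n → Fin d) (Fin n → Fin d) ℂ | ∀ x, 0 ≤ star x ⬝ᵥ M.mulVec x}
        = ⋂ x : (Fin n → Fin d) → ℂ,
          {M : Matrix (Fin n → Fin d) (Fin n → Fin d) ℂ | 0 ≤ star x ⬝ᵥ M.mulVec x} := by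
      ext M
      simp [Set.mem_iInter]
    rw [e]
    refine isClosed_iInter fun x => ?_
    have hc : Continuous fun M : Matrix (Fin n → Fin d) (Fin n → Fin d) ℂ =>
        star x ⬝ᵥ M.mulVec x := by
      show Continuous fun M : Matrix (Fin n → Fin d) (Fin n → Fin d) ℂ =>
        ∑ v, (star x) v * ∑ w, M v w * x w
      refine continuous_finset_sum _ fun v _ => Continuous.mul continuous_const ?_
      exact continuous_finset_sum _ fun w _ => (continuous_entry v w).mul continuous_const
    exact isClosed_nonnegC.preimage hc
  have h3 : IsClosed {M : Matrix (Fin n → Fin d) (Fin n → Fin d) ℂ | M.trace = 1} :=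
    isClosed_eq (Continuous.matrix_trace continuous_id) continuous_const
  have h4 : IsClosed {M : Matrix (Fin n → Fin d) (Fin n → Fin d) ℂ | Inv M} := by
    have e : {M : Matrix (Fin n → Fin d) (Fin n → Fin d) ℂ | Inv M}
        = ⋂ π : Equiv.Perm (Fin n), ⋂ v, ⋂ w,
          {M : Matrix (Fin n → Fin d) (Fin n → Fin d) ℂ | M (v ∘ π) (w ∘ π) = M v w} := by
      ext M
      simp [Set.mem_iInter, Inv]
    rw [e]
    exact isClosed_iInter fun π => isClosed_iInter fun v => isClosed_iInter fun w =>
      isClosed_eq (continuous_entry _ _) (continuous_entry _ _)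
  have e : DenSet n d = ({M : Matrix (Fin n → Fin d) (Fin n → Fin d) ℂ | M.IsHermitian}
      ∩ {M | ∀ x, 0 ≤ star x ⬝ᵥ M.mulVec x})
      ∩ ({M | M.trace = 1} ∩ {M | Inv M}) := by
    ext M
    constructor
    · rintro ⟨⟨a, b⟩, c, e'⟩
      exact ⟨Matrix.posSemidef_iff_dotProduct_mulVec.mp ⟨a, b⟩, c, e'⟩
    · rintro ⟨⟨a, b⟩, c, e'⟩
      exact ⟨Matrix.posSemidef_iff_dotProduct_mulVec.mpr ⟨a, b⟩, c, e'⟩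
  rw [e]
  exact (h1.inter h2).inter (h3.inter h4)

lemma denset_isCompact (n d : ℕ) : IsCompact (DenSet n d) := by
  have hS : IsCompact ((Set.univ : Set (Fin n → Fin d)).pi
      (fun _ => (Set.univ : Set (Fin n → Fin d)).pi
        (fun _ => Metric.closedBall (0:ℂ) 1)) :
      Set (Matrix (Fin n → Fin d) (Fin n → Fin d) ℂ)) :=
    isCompact_univ_pi fun _ => isCompact_univ_pi fun _ => isCompact_closedBall 0 1
  refine IsCompact.of_isClosed_subset hS (denset_closed n d) ?_
  rintro M ⟨hpsd, htr, _⟩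
  intro v _
  intro w _
  simp only [Metric.mem_closedBall, Complex.dist_eq, sub_zero]
  exact entry_abs_le_one hpsd htr v w

end Compactness


section Helly

open Module

lemma finrank_WH_pos (n d : ℕ) (hd : 1 ≤ d) : 1 ≤ Module.finrank ℝ (WH n d) := by
  have h0 := denset_nonempty n d hd
  have hne : (((Fintype.card (Fin n → Fin d) : ℝ)⁻¹) •
      (1 : Matrix (Fin n → Fin d) (Fin n → Fin d) ℂ)) ≠ 0 := by
    intro hc
    have := h0.2.1
    rw [hc] at this
    simp at this
  have : Nontrivial (WH n d) := by
    refine ⟨⟨⟨_, denset_subset_WH n d h0⟩, 0, ?_⟩⟩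
    intro hc
    exact hne (congrArg Subtype.val hc)
  exact Module.finrank_pos

lemma exists_universal (n d : ℕ) (hd : 1 ≤ d) :
    ∃ g ∈ DenSet n d, ∀ σ ∈ DenSet n d, ∃ y ∈ DenSet n d,
      ((Module.finrank ℝ (WH n d) : ℝ) + 1) • g
        = σ + (Module.finrank ℝ (WH n d) : ℝ) • y := by
  classical
  set m := Module.finrank ℝ (WH n d) with hmdef
  have hm : 1 ≤ m := finrank_WH_pos n d hd
  have hm0 : (0:ℝ) < (m:ℝ) := by exact_mod_cast hm
  have hm1 : (0:ℝ) < (m:ℝ) + 1 := by linarith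
  set E := WH n d with hEdef
  set C' : Set E := (Subtype.val) ⁻¹' (DenSet n d) with hC'def
  have hC'conv : Convex ℝ C' := (denset_convex n d).linear_preimage (E.subtype)
  have hC'cpt : IsCompact C' := by
    refine (Topology.IsInducing.isCompact_iff Topology.IsInducing.subtypeVal).mpr ?_
    convert denset_isCompact n d using 1
    ext x
    constructor
    · rintro ⟨y, hy, rfl⟩
      exact hy
    · intro hx
      exact ⟨⟨x, denset_subset_WH n d hx⟩, hx, rfl⟩
  have hsbar0 : (⟨_, denset_subset_WH n d (denset_nonempty n d hd)⟩ : E) ∈ C' :=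
    denset_nonempty n d hd
  set sbar : E := ⟨_, denset_subset_WH n d (denset_nonempty n d hd)⟩ with hsbardef
  have hsbar : sbar ∈ C' := hsbar0
  set c₁ : ℝ := (1:ℝ)/((m:ℝ)+1) with hc1
  set c₂ : ℝ := (m:ℝ)/((m:ℝ)+1) with hc2
  have hc1pos : 0 < c₁ := by positivity
  have hc2pos : 0 < c₂ := by positivity
  have hc12 : c₁ + c₂ = 1 := by
    rw [hc1, hc2]
    field_simp
    ring
  set F : C' → Set E := fun σ => (fun y : E => c₁ • (σ : E) + c₂ • y) '' C' with hFdef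
  have hmap_cont : ∀ σ : C', Continuous (fun y : E => c₁ • (σ : E) + c₂ • y) := by
    intro σ
    refine (Topology.IsInducing.continuous_iff Topology.IsInducing.subtypeVal).mpr ?_
    exact (continuous_const.add (continuous_subtype_val.const_smul c₂) :
      Continuous fun y : E => (c₁ • ((σ : E) : Matrix (Fin n → Fin d) (Fin n → Fin d) ℂ)
        + c₂ • (y : Matrix (Fin n → Fin d) (Fin n → Fin d) ℂ)))
  have hFconv : ∀ σ : C', Convex ℝ (F σ) := by
    rintro σ x ⟨x', hx', rfl⟩ y ⟨y', hy', rfl⟩ a b ha hb hab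
    refine ⟨a • x' + b • y', hC'conv hx' hy' ha hb hab, ?_⟩
    match_scalars
    · linear_combination (-((1:ℝ) + (m:ℝ))⁻¹) * hab
    · ring
    · ring
  have hFcpt : ∀ σ : C', IsCompact (F σ) := fun σ => hC'cpt.image (hmap_cont σ)
  have hFinter : ∀ I : Finset C', I.card ≤ Module.finrank ℝ E + 1 → (⋂ i ∈ I, F i).Nonempty := by
    intro I hI
    have hle : I.card ≤ m + 1 := by
      rw [hmdef, hEdef] at *
      exact hI
    set p : ℕ := m + 1 - I.card with hpdef
    set g : E := c₁ • ((∑ i ∈ I, (i : E)) + (p:ℝ) • sbar) with hgdef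
    refine ⟨g, ?_⟩
    rw [Set.mem_iInter₂]
    intro i hiI
    have h1I : 1 ≤ I.card := Finset.card_pos.mpr ⟨i, hiI⟩
    set yI : E := ((1:ℝ)/(m:ℝ)) • ((∑ j ∈ I.erase i, (j : E)) + (p:ℝ) • sbar) with hyIdef
    have hnone : (none : Option C') ∉ (I.erase i).map ⟨some, Option.some_injective _⟩ := by
      simp
    set t : Finset (Option C') := insert (none : Option C')
      ((I.erase i).map ⟨some, Option.some_injective _⟩) with htdef
    set w : Option C' → ℝ := fun o => o.elim (p:ℝ) (fun _ => 1) with hwdef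
    set z : Option C' → E := fun o => o.elim sbar (fun j => (j : E)) with hzdef
    have hw0 : ∀ o ∈ t, 0 ≤ w o := by
      intro o _
      rcases o with _ | j
      · exact Nat.cast_nonneg p
      · exact zero_le_one
    have hwsum : ∑ o ∈ t, w o = (m:ℝ) := by
      rw [htdef, Finset.sum_insert hnone, Finset.sum_map]
      simp only [hwdef, Option.elim_none, Option.elim_some, Function.Embedding.coeFn_mk]
      rw [Finset.sum_const, Finset.card_erase_of_mem hiI, nsmul_eq_mul, mul_one]
      rw [hpdef]
      push_cast [Nat.cast_sub hle, Nat.cast_sub h1I]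
      ring
    have hwpos : 0 < ∑ o ∈ t, w o := by
      rw [hwsum]
      exact hm0
    have hzmem : ∀ o ∈ t, z o ∈ C' := by
      intro o ho
      rcases o with _ | j
      · exact hsbar
      · exact j.2
    have hcm := Convex.centerMass_mem hC'conv hw0 hwpos hzmem
    have hcmval : t.centerMass w z = yI := by
      rw [Finset.centerMass, hwsum, htdef, Finset.sum_insert hnone, Finset.sum_map]
      simp only [hwdef, hzdef, Option.elim_none, Option.elim_some,
        Function.Embedding.coeFn_mk, one_smul]
      rw [hyIdef, one_div, add_comm]
    rw [hcmval] at hcm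
    refine ⟨yI, hcm, ?_⟩
    show c₁ • (i : E) + c₂ • yI = g
    rw [hyIdef, hgdef, smul_smul]
    have hc2m : c₂ * ((1:ℝ)/(m:ℝ)) = c₁ := by
      rw [hc1, hc2]
      field_simp
    rw [hc2m]
    have hsum : (∑ j ∈ I, (j : E)) = (i : E) + ∑ j ∈ I.erase i, (j : E) :=
      (Finset.add_sum_erase I _ hiI).symm
    rw [hsum]
    module
  have hinter := Convex.helly_theorem_compact' (𝕜 := ℝ) hFconv hFcpt hFinter
  obtain ⟨g, hg⟩ := hinter
  rw [Set.mem_iInter] at hg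
  have hgC' : g ∈ C' := by
    obtain ⟨y, hy, hyeq⟩ := hg ⟨sbar, hsbar⟩
    rw [← hyeq]
    exact hC'conv hsbar hy hc1pos.le hc2pos.le hc12
  refine ⟨(g : Matrix (Fin n → Fin d) (Fin n → Fin d) ℂ), hgC', ?_⟩
  intro σ hσ
  have hσE : σ ∈ E := denset_subset_WH n d hσ
  have hσ' : (⟨σ, hσE⟩ : E) ∈ C' := hσ
  obtain ⟨y, hy, hyeq⟩ := hg ⟨⟨σ, hσE⟩, hσ'⟩
  refine ⟨(y : Matrix (Fin n → Fin d) (Fin n → Fin d) ℂ), hy, ?_⟩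
  have hmat : c₁ • σ + c₂ • (y : Matrix (Fin n → Fin d) (Fin n → Fin d) ℂ)
      = (g : Matrix (Fin n → Fin d) (Fin n → Fin d) ℂ) := congrArg Subtype.val hyeq
  rw [← hmat, smul_add, smul_smul, smul_smul]
  have e1 : ((m:ℝ)+1) * c₁ = 1 := by
    rw [hc1]
    field_simp
  have e2 : ((m:ℝ)+1) * c₂ = (m:ℝ) := by
    rw [hc2]
    field_simp
  rw [e1, e2, one_smul]

end Helly

end MatrixPart

end UnivSym

namespace UnivSym

section Bridge

variable {n d : ℕ}

lemma permMatrix_conj_apply (π : Equiv.Perm (Fin n))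
    (σ : Matrix (Fin n → Fin d) (Fin n → Fin d) ℂ) (v w : Fin n → Fin d) :
    (permMatrixOn (Fin d) π * σ * (permMatrixOn (Fin d) π)ᴴ) v w = σ (v ∘ π) (w ∘ π) := by
  simp only [Matrix.mul_apply, Matrix.conjTranspose_apply, permMatrixOn]
  have h1 : ∀ b, (∑ a, (if a = v ∘ π then (1:ℂ) else 0) * σ a b) = σ (v ∘ π) b := by
    intro b
    rw [Finset.sum_eq_single (v ∘ π)]
    · simp
    · intro a _ ha
      simp [ha]
    · intro h
      exact absurd (Finset.mem_univ _) h
  have h2 : ∀ b, (if b = w ∘ π then (1:ℂ) else 0) = if b = w ∘ π then 1 else 0 := fun _ => rfl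
  calc (∑ b, (∑ a, (if a = v ∘ π then (1:ℂ) else 0) * σ a b) * star (if b = w ∘ π then (1:ℂ) else 0))
      = ∑ b, σ (v ∘ π) b * star (if b = w ∘ π then (1:ℂ) else 0) := by
        exact Finset.sum_congr rfl fun b _ => by rw [h1 b]
    _ = σ (v ∘ π) (w ∘ π) := by
        rw [Finset.sum_eq_single (w ∘ π)]
        · simp
        · intro b _ hb
          simp [hb]
        · intro h
          exact absurd (Finset.mem_univ _) h

lemma symm_iff_inv (σ : Matrix (Fin n → Fin d) (Fin n → Fin d) ℂ) :
    IsSymmetricState σ ↔ Inv σ := by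
  constructor
  · intro h π v w
    conv_rhs => rw [← h π]
    rw [permMatrix_conj_apply]
  · intro h π
    ext v w
    rw [permMatrix_conj_apply, h π v w]

end Bridge

end UnivSym

/-- Existence of a universal symmetric state: there is a symmetric
density matrix `σ^u` on `(ℂ^d)^{⊗n}` with `σ ≤ (n+1)^{d²−1}·σ^u` for every symmetric
density matrix `σ`. -/
theorem universal_symmetric_state_exists (d n : ℕ) (hd : 1 ≤ d) (hn : 1 ≤ n) :
    ∃ σu : Matrix (Fin n → Fin d) (Fin n → Fin d) ℂ,
      IsDensityMatrix σu ∧ IsSymmetricState σu ∧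
      ∀ σ : Matrix (Fin n → Fin d) (Fin n → Fin d) ℂ,
        IsDensityMatrix σ → IsSymmetricState σ →
        ((((n : ℂ) + 1) ^ (d ^ 2 - 1)) • σu - σ).PosSemidef := by
  classical
  rcases eq_or_lt_of_le hd with hd1 | hd2
  · -- d = 1 : everything is trivial
    subst hd1
    have hcard : Fintype.card (Fin n → Fin 1) = 1 := by
      simp [Fintype.card_fun]
    have hsub : ∀ v w : Fin n → Fin 1, v = w := fun v w =>
      funext fun i => Subsingleton.elim _ _
    refine ⟨1, ⟨Matrix.PosSemidef.one, ?_⟩, ?_, ?_⟩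
    · rw [Matrix.trace_one, hcard]
      simp
    · refine (UnivSym.symm_iff_inv _).mpr ?_
      intro π v w
      rw [hsub (v ∘ π) (w ∘ π), hsub v w]
      simp [Matrix.one_apply]
    · intro σ hσdm _
      have hσ1 : σ = 1 := by
        ext v w
        rw [hsub v default, hsub w default]
        have htr := hσdm.2
        rw [Matrix.trace, Fintype.sum_unique] at htr
        rw [show σ.diag default = σ default default from rfl] at htr
        rw [htr]
        simp [Matrix.one_apply]
      rw [hσ1]
      have h0 : (1:ℕ) ^ 2 - 1 = 0 := rfl
      rw [h0, pow_zero, one_smul, sub_self]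
      exact Matrix.PosSemidef.zero
  · -- d ≥ 2 : the Helly argument
    have hd' : 1 ≤ d := hd
    obtain ⟨g, hgD, hkey⟩ := UnivSym.exists_universal n d hd'
    refine ⟨g, ⟨hgD.1, hgD.2.1⟩, (UnivSym.symm_iff_inv g).mpr hgD.2.2, ?_⟩
    intro σ hσdm hσsym
    have hσD : σ ∈ UnivSym.DenSet n d := ⟨hσdm.1, hσdm.2, (UnivSym.symm_iff_inv σ).mp hσsym⟩
    obtain ⟨y, hyD, heq⟩ := hkey σ hσD
    set m : ℕ := Module.finrank ℝ (UnivSym.WH n d) with hmdef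
    have hmb : m + 1 ≤ (n+1)^(d^2-1) := by
      have h1 : m ≤ Fintype.card (UnivSym.Orb n (Fin d × Fin d)) := UnivSym.finrank_WH_le n d
      have h3 : Fintype.card (Fin d × Fin d) = d^2 := by
        rw [Fintype.card_prod, Fintype.card_fin, sq]
      have h2 : Fintype.card (UnivSym.Orb n (Fin d × Fin d))
          < (n+1)^(Fintype.card (Fin d × Fin d) - 1) := by
        refine UnivSym.card_orb_lt hn ?_
        rw [h3]
        nlinarith
      rw [h3] at h2
      omega
    set L : ℝ := (((n+1)^(d^2-1) : ℕ) : ℝ) with hLdef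
    have hLm : ((m:ℝ)+1) ≤ L := by
      rw [hLdef]
      exact_mod_cast hmb
    have hcast : (((n:ℂ)+1)^(d^2-1)) • g = L • g := by
      ext v w
      show ((n:ℂ)+1)^(d^2-1) * g v w = L • g v w
      rw [Complex.real_smul, hLdef]
      push_cast
      ring
    have halg : L • g - σ = (L - ((m:ℝ)+1)) • g + (m:ℝ) • y := by
      rw [sub_smul, heq]
      abel
    rw [hcast, halg]
    exact (UnivSym.psd_real_smul hgD.1 (by linarith)).add
      (UnivSym.psd_real_smul hyD.1 (Nat.cast_nonneg m))

end
end

section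
/- Let N : x ↦ ρ_x be a classical-quantum channel with finite input alphabet X, and let ρ_XB := Σ_x (1/|X|)·|x⟩⟨x| ⊗ ρ_x be the cq state with uniform input distribution. Suppose a data-compression-with-side-information scheme for n copies of ρ_XB, with bijection f = (f̂, f̃) : X^n → Ĉ × C̃ and POVMs {Λ^{c̃}_{ĉ}}, has error probability P_err. Then there exists an (n, |Ĉ|) code for N whose average error probability is at most P_err. -/
open scoped Kronecker ComplexOrder
open Matrix Filter

noncomputable section

/-- Renes. A data-compression-with-side-information scheme for the
uniform-input cq state yields an `(n, |Ĉ|)` channel code with no larger error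
probability. -/
theorem channel_code_from_data_compression {X : Type*} [Fintype X] [DecidableEq X]
    [Nonempty X] {d : ℕ}
    (ρ : X → Matrix (Fin d) (Fin d) ℂ) (hρ : ∀ x, IsDensityMatrix (ρ x))
    (n : ℕ) {Chat Ctil : Type*} [Fintype Chat] [Fintype Ctil]
    (f : (Fin n → X) ≃ Chat × Ctil)
    (Λ : Ctil → Chat → Matrix (Fin n → Fin d) (Fin n → Fin d) ℂ)
    (hΛ : ∀ ctil, (∀ chat, (Λ ctil chat).PosSemidef) ∧ (∑ chat, Λ ctil chat) = 1) :
    ∃ (c : Fin (Fintype.card Chat) → (Fin n → X))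
      (Λ' : Fin (Fintype.card Chat) → Matrix (Fin n → Fin d) (Fin n → Fin d) ℂ),
      (∀ i, (Λ' i).PosSemidef) ∧ (∑ i, Λ' i = 1) ∧
      1 - ((Fintype.card Chat : ℝ))⁻¹ * ∑ i, ((Λ' i * prodState ρ (c i)).trace).re ≤
        dcErr (fun _ => ((Fintype.card X : ℝ))⁻¹) ρ n f Λ := by
  classical
  have hcard : Fintype.card Chat * Fintype.card Ctil = Fintype.card X ^ n := by
    rw [← Fintype.card_prod, ← Fintype.card_congr f, Fintype.card_fun, Fintype.card_fin]
  have hXpos : 0 < Fintype.card X ^ n := pow_pos Fintype.card_pos n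
  have hMpos : 0 < Fintype.card Chat := by
    rcases Nat.eq_zero_or_pos (Fintype.card Chat) with h | h
    · rw [h, zero_mul] at hcard; omega
    · exact h
  have hKpos : 0 < Fintype.card Ctil := by
    rcases Nat.eq_zero_or_pos (Fintype.card Ctil) with h | h
    · rw [h, mul_zero] at hcard; omega
    · exact h
  have : Nonempty Ctil := Fintype.card_pos_iff.mp hKpos
  set M : ℕ := Fintype.card Chat with hM
  set K : ℕ := Fintype.card Ctil with hK
  set E : Ctil → ℝ := fun ct => 1 - (M : ℝ)⁻¹ *
      ∑ chat, ((Λ ct chat * prodState ρ (f.symm (chat, ct))).trace).re with hE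
  set T : ℝ := ∑ ct : Ctil, ∑ chat : Chat,
      (1 - ((Λ ct chat * prodState ρ (f.symm (chat, ct))).trace).re) with hT
  have hMne : (M : ℝ) ≠ 0 := Nat.cast_ne_zero.mpr hMpos.ne'
  have hKne : (K : ℝ) ≠ 0 := Nat.cast_ne_zero.mpr hKpos.ne'
  have hdc : dcErr (fun _ => ((Fintype.card X : ℝ))⁻¹) ρ n f Λ = ((M : ℝ) * K)⁻¹ * T := by
    have h1 : ∀ xs : Fin n → X, (∏ _i : Fin n, ((Fintype.card X : ℝ))⁻¹) = ((M : ℝ) * K)⁻¹ := by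
      intro xs
      rw [Finset.prod_const, Finset.card_univ, Fintype.card_fin, inv_pow, ← Nat.cast_pow,
        ← hcard]
      push_cast
      ring
    rw [dcErr, hT]
    rw [Finset.sum_comm]
    rw [← Fintype.sum_prod_type']
    rw [← Equiv.sum_comp f (fun p : Chat × Ctil =>
      (1 - ((Λ p.2 p.1 * prodState ρ (f.symm p)).trace).re))]
    rw [Finset.mul_sum]
    refine Finset.sum_congr rfl fun xs _ => ?_
    rw [h1 xs, Equiv.symm_apply_apply]
  have hsumE : ∑ ct : Ctil, E ct = (M : ℝ)⁻¹ * T := by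
    rw [hT, Finset.mul_sum]
    refine Finset.sum_congr rfl fun ct _ => ?_
    simp only [hE]
    rw [Finset.sum_sub_distrib, Finset.sum_const, Finset.card_univ, ← hM, nsmul_eq_mul,
      mul_one, mul_sub, inv_mul_cancel₀ hMne]
  have hsumE' : ∑ ct : Ctil, E ct = ∑ _ct : Ctil,
      dcErr (fun _ => ((Fintype.card X : ℝ))⁻¹) ρ n f Λ := by
    rw [hsumE, hdc, Finset.sum_const, Finset.card_univ, ← hK, nsmul_eq_mul]
    field_simp
  obtain ⟨ct₀, -, hct₀⟩ := Finset.exists_le_of_sum_le Finset.univ_nonempty hsumE'.le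
  set e : Fin M ≃ Chat := (Fintype.equivFin Chat).symm with he
  refine ⟨fun i => f.symm (e i, ct₀), fun i => Λ ct₀ (e i), fun i => (hΛ ct₀).1 (e i), ?_, ?_⟩
  · rw [← (hΛ ct₀).2]
    exact Fintype.sum_equiv e _ _ fun i => rfl
  · refine le_trans (le_of_eq ?_) hct₀
    rw [hE]
    congr 1
    congr 1
    exact Fintype.sum_equiv e _ _ fun i => rfl

end
end
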